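/- Any walk in the MLA* state space from start state (s, 0, 1) to a goal state (g[K], T, K+1) visits all goal locations g[1], ..., g[K] in order: there exist times t_1 ≤ t_2 ≤ ... ≤ t_K ≤ T such that the walk is at location g[k] at time t_k with label k. -/
import Mathlib


/-- The MLA* transition relation on states `(v, t, k)`: an edge from `(v, t, k)` to
`(v', t+1, k')` iff `v' = v` or `(v, v') ∈ E`, and `k' = k + 1` if `v' = g k`,
else `k' = k`. -/
def MLAStep {V : Type*} [DecidableEq V] (G : SimpleGraph V) (g : ℕ → V) :
    V × ℕ × ℕ → V × ℕ × ℕ → Prop := fun p q =>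
  q.2.1 = p.2.1 + 1 ∧ (q.1 = p.1 ∨ G.Adj p.1 q.1) ∧
    q.2.2 = if q.1 = g p.2.2 then p.2.2 + 1 else p.2.2

/-- Any walk in the MLA* state space from the start state `(s, 0, 1)` to a goal
state `(g K, T, K+1)` visits all goal locations `g 1, ..., g K` in order: there are
times `τ 1 ≤ ... ≤ τ K ≤ T` such that for each `k` the walk, while at label `k`,
arrives at location `g k` at time `τ k` (incrementing its label to `k + 1`). -/
theorem mla_walk_visits_goals_in_order {V : Type*} [DecidableEq V]
    (G : SimpleGraph V) (g : ℕ → V) (K : ℕ) (hK : 1 ≤ K)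
    (s : V) (T n : ℕ) (w : ℕ → V × ℕ × ℕ)
    (hstep : ∀ i < n, MLAStep G g (w i) (w (i + 1)))
    (hstart : w 0 = (s, 0, 1)) (hend : w n = (g K, T, K + 1)) :
    ∃ τ : ℕ → ℕ, MonotoneOn τ (Set.Icc 1 K) ∧ τ K ≤ T ∧
      ∀ k ∈ Set.Icc 1 K, ∃ i, i + 1 ≤ n ∧ (w i).2.2 = k ∧
        w (i + 1) = (g k, τ k, k + 1) := by
  -- time coordinate equals index
  have htime : ∀ i ≤ n, (w i).2.1 = i := by
    intro i hi
    induction i with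
    | zero => simp [hstart]
    | succ j ih =>
      have hs := (hstep j (by omega)).1
      rw [hs, ih (by omega)]
  have hT : T = n := by
    have h := htime n le_rfl
    rw [hend] at h; simpa using h
  set ℓ : ℕ → ℕ := fun i => (w i).2.2 with hℓdef
  have hℓ0 : ℓ 0 = 1 := by simp [hℓdef, hstart]
  have hℓn : ℓ n = K + 1 := by simp [hℓdef, hend]
  have hstepℓ : ∀ i < n, ℓ (i + 1) = ℓ i ∨ ℓ (i + 1) = ℓ i + 1 := by
    intro i hi
    have hs := (hstep i hi).2.2
    by_cases h : (w (i + 1)).1 = g (w i).2.2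
    · right; simpa [h] using hs
    · left; simpa [h] using hs
  set S : ℕ → Set ℕ := fun k => {i | k + 1 ≤ ℓ i} with hSdef
  have hnS : ∀ k ≤ K, n ∈ S k := by intro k hk; simp [hSdef]; omega
  refine ⟨fun k => sInf (S k), ?_, ?_, ?_⟩
  · intro a ha b hb hab
    exact csInf_le_csInf (OrderBot.bddBelow _) ⟨n, hnS b hb.2⟩
      (fun i hi => by simp [hSdef] at hi ⊢; omega)
  · rw [hT]; exact Nat.sInf_le (hnS K le_rfl)
  · rintro k ⟨hk1, hkK⟩
    set m := sInf (S k) with hm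
    have hmem : m ∈ S k := Nat.sInf_mem ⟨n, hnS k hkK⟩
    have hmn : m ≤ n := Nat.sInf_le (hnS k hkK)
    have hm0 : m ≠ 0 := by
      intro h
      have : k + 1 ≤ ℓ 0 := by rw [← h]; exact hmem
      omega
    have hnotmem : m - 1 ∉ S k := Nat.notMem_of_lt_sInf (by omega)
    have hℓm1 : ℓ (m - 1) ≤ k := by
      simp [hSdef] at hnotmem; omega
    have hlt : m - 1 < n := by omega
    have hms : m - 1 + 1 = m := by omega
    have hstepm := hstepℓ (m - 1) hlt
    rw [hms] at hstepm
    have hℓm : k + 1 ≤ ℓ m := hmem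
    have hℓeq : ℓ (m - 1) = k ∧ ℓ m = k + 1 := by omega
    have hs := (hstep (m - 1) hlt).2.2
    rw [hms] at hs
    have hloc : (w m).1 = g k := by
      by_contra h
      have h' : (w m).1 ≠ g (w (m-1)).2.2 := by
        change ℓ (m-1) = k ∧ _ at hℓeq
        rw [show (w (m-1)).2.2 = ℓ (m-1) from rfl, hℓeq.1]; exact h
      rw [if_neg h'] at hs
      have : ℓ m = ℓ (m - 1) := hs
      omega
    refine ⟨m - 1, by omega, hℓeq.1, ?_⟩
    have htm : (w m).2.1 = m := htime m hmn
    rw [hms]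
    exact Prod.ext hloc (Prod.ext htm hℓeq.2)
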